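/- arXiv:1710.08068 — 2 statements merged into one kernel-verified Lean document; each statement's English description precedes it below -/
import Mathlib

section
/- Let A be a locally noetherian Grothendieck category in which every nonzero object has an associated point, and let A' be the full subcategory of A_fg consisting of objects all of whose support points satisfy condition (*). Then for a full and replete subcategory C of A' the following are equivalent: (1) C is a Serre subcategory of A'; (2) C is a torsion class in A' (closed under extensions and quotients); (3) C is a thick subcategory of A' (an abelian subcategory with exact inclusion, closed under extensions); (4) C is a narrow subcategory of A' (closed under extensions and cokernels). -/
/-!
Common set-up: Rosenberg's spectrum of an abelian category.

For objects `X Y` of an abelian category `C`, `X ≺ Y` means that `X` is a subquotient of a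
finite direct sum of copies of `Y`; `X ≈ Y` means `X ≺ Y ≺ X`.  A nonzero object `P` is
*spectral* if it is `≈`-equivalent to each of its nonzero subobjects, and the spectrum
`𝔖pec(C)` is the collection of `≈`-equivalence classes `⟨P⟩` of spectral objects.
`Supp(M) = {⟨P⟩ : P ≺ M}` and `Ass(M) = {⟨P⟩ : some spectral object of class ⟨P⟩ embeds in M}`.
-/

open CategoryTheory CategoryTheory.Limits

attribute [local instance] CategoryTheory.Abelian.hasFiniteBiproducts
attribute [local instance] CategoryTheory.Limits.hasBinaryBiproducts_of_finite_biproducts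

universe v u

namespace RosenbergSpec

variable (C : Type u) [Category.{v} C] [Abelian C]

/-- `X ≺ Y` : `X` is a subquotient of a finite direct sum of copies of `Y`. -/
def Prec (X Y : C) : Prop :=
  ∃ n : ℕ, 0 < n ∧ ∃ (S : C) (ι : S ⟶ ⨁ (fun _ : Fin n => Y)) (π : S ⟶ X),
    Mono ι ∧ Epi π

/-- `X ≈ Y` : mutual subquotient equivalence. -/
def PrecEquiv (X Y : C) : Prop := Prec C X Y ∧ Prec C Y X

/-- A nonzero object is spectral if it is `≈`-equivalent to each of its nonzero subobjects. -/
def IsSpectral (P : C) : Prop :=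
  ¬ IsZero P ∧ ∀ (Q : C) (f : Q ⟶ P), Mono f → ¬ IsZero Q → PrecEquiv C Q P

/-- The type of spectral objects of `C`. -/
def SpectralObj := {P : C // IsSpectral C P}

/-- The spectrum `𝔖pec(C)` : equivalence classes `⟨P⟩` of spectral objects. -/
def SpecPoint := Quot (fun P Q : SpectralObj C => PrecEquiv C P.1 Q.1)

/-- The point `⟨P⟩` of the spectrum attached to a spectral object `P`. -/
def pt (P : SpectralObj C) : SpecPoint C := Quot.mk _ P

/-- `Supp(M) = {⟨P⟩ : P spectral, P ≺ M}`. -/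
def supp (M : C) : Set (SpecPoint C) :=
  {x | ∃ P : SpectralObj C, pt C P = x ∧ Prec C P.1 M}

/-- `Ass(M) = {⟨P⟩ : some spectral object of class ⟨P⟩ is a subobject of M}`. -/
def ass (M : C) : Set (SpecPoint C) :=
  {x | ∃ P : SpectralObj C, pt C P = x ∧ ∃ f : P.1 ⟶ M, Mono f}

/-- A subset of the spectrum is specialization closed if together with any point `⟨P⟩`
it contains all of `Supp(P)`. -/
def SpecializationClosed (S : Set (SpecPoint C)) : Prop :=
  ∀ P : SpectralObj C, pt C P ∈ S → supp C P.1 ⊆ S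

/-- Every nonzero object of `C` has an associated point. -/
def HasAssociatedPoints : Prop :=
  ∀ M : C, ¬ IsZero M → (ass C M).Nonempty

/-- A Grothendieck category is locally noetherian if it admits a small generating family
of noetherian objects. -/
def LocallyNoetherian : Prop :=
  ∃ (ι : Type v) (G : ι → C), ObjectProperty.IsSeparating (fun X : C => X ∈ Set.range G) ∧ ∀ i, IsNoetherianObject (G i)

/-- `0 ⟶ X ⟶ M ⟶ Y ⟶ 0` is a short exact sequence. -/
def IsShortExact {X M Y : C} (f : X ⟶ M) (g : M ⟶ Y) : Prop :=
  ∃ w : f ≫ g = 0, (ShortComplex.mk f g w).ShortExact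

/-- `f : N ⟶ M` exhibits `N` as an essential subobject of `M`. -/
def IsEssential {N M : C} (f : N ⟶ M) : Prop :=
  Mono f ∧ ∀ (K : C) (g : K ⟶ M), Mono g → ¬ IsZero K → ¬ IsZero (pullback f g)

/-- `i : P ⟶ E` exhibits `E` as an injective hull of `P`. -/
def IsInjectiveHull {P E : C} (i : P ⟶ E) : Prop :=
  Injective E ∧ IsEssential C i

/-- A torsion pair `(T, F)` on an abelian category: both classes are replete, all maps from
`T` to `F` vanish, and every object is an extension of an object of `F` by an object of `T`. -/
structure IsTorsionPair (T F : Set C) : Prop where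
  repleteT : ∀ X Y : C, X ∈ T → Nonempty (X ≅ Y) → Y ∈ T
  repleteF : ∀ X Y : C, X ∈ F → Nonempty (X ≅ Y) → Y ∈ F
  hom_zero : ∀ X ∈ T, ∀ Y ∈ F, ∀ f : X ⟶ Y, f = 0
  exists_ses : ∀ M : C, ∃ (X Y : C) (f : X ⟶ M) (g : M ⟶ Y),
    IsShortExact C f g ∧ X ∈ T ∧ Y ∈ F

end RosenbergSpec

namespace RosenbergSpec

variable (C : Type u) [Category.{v} C] [Abelian C]

/-- Condition `(*)` for a point `x = ⟨P⟩` of the spectrum : for every spectral object `Q`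
with `⟨Q⟩ = x` and every finitely generated object `M` with `x ∈ Supp(M)`,
`Hom(M, Q) ≠ 0`. -/
def StarCond (x : SpecPoint C) : Prop :=
  ∀ Q : SpectralObj C, pt C Q = x →
    ∀ M : C, IsNoetherianObject M → x ∈ supp C M → ∃ f : M ⟶ Q.1, f ≠ 0

/-- The subcategory `A'` of `A_fg` : finitely generated objects all of whose support points
satisfy condition `(*)`. -/
def Aprime : Set C :=
  {M : C | IsNoetherianObject M ∧ ∀ x ∈ supp C M, StarCond C x}

/-- A Serre subcategory of the abelian category determined by `A'` : contains `0` and is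
closed under subobjects, quotients and extensions taken inside `A'`. -/
def IsSerreIn (A' 𝒞 : Set C) : Prop :=
  (∀ Z : C, IsZero Z → Z ∈ 𝒞) ∧
  (∀ (X Y : C) (f : X ⟶ Y), Mono f → Y ∈ 𝒞 → X ∈ A' → X ∈ 𝒞) ∧
  (∀ (X Y : C) (f : X ⟶ Y), Epi f → X ∈ 𝒞 → Y ∈ A' → Y ∈ 𝒞) ∧
  (∀ (X M Y : C) (f : X ⟶ M) (g : M ⟶ Y),
    IsShortExact C f g → X ∈ 𝒞 → Y ∈ 𝒞 → M ∈ A' → M ∈ 𝒞)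

/-- A torsion class in `A'` : contains `0` and is closed under extensions and quotients
taken inside `A'`. -/
def IsTorsionClassIn (A' 𝒞 : Set C) : Prop :=
  (∀ Z : C, IsZero Z → Z ∈ 𝒞) ∧
  (∀ (X Y : C) (f : X ⟶ Y), Epi f → X ∈ 𝒞 → Y ∈ A' → Y ∈ 𝒞) ∧
  (∀ (X M Y : C) (f : X ⟶ M) (g : M ⟶ Y),
    IsShortExact C f g → X ∈ 𝒞 → Y ∈ 𝒞 → M ∈ A' → M ∈ 𝒞)

/-- A thick subcategory of `A'` : a full abelian subcategory (contains `0`, closed under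
kernels and cokernels) that is closed under extensions taken inside `A'`. -/
def IsThickIn (A' 𝒞 : Set C) : Prop :=
  (∀ Z : C, IsZero Z → Z ∈ 𝒞) ∧
  (∀ (X Y : C) (f : X ⟶ Y), X ∈ 𝒞 → Y ∈ 𝒞 → kernel f ∈ 𝒞) ∧
  (∀ (X Y : C) (f : X ⟶ Y), X ∈ 𝒞 → Y ∈ 𝒞 → cokernel f ∈ 𝒞) ∧
  (∀ (X M Y : C) (f : X ⟶ M) (g : M ⟶ Y),
    IsShortExact C f g → X ∈ 𝒞 → Y ∈ 𝒞 → M ∈ A' → M ∈ 𝒞)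

/-- A narrow subcategory of `A'` : contains `0` and is closed under cokernels and under
extensions taken inside `A'`. -/
def IsNarrowIn (A' 𝒞 : Set C) : Prop :=
  (∀ Z : C, IsZero Z → Z ∈ 𝒞) ∧
  (∀ (X Y : C) (f : X ⟶ Y), X ∈ 𝒞 → Y ∈ 𝒞 → cokernel f ∈ 𝒞) ∧
  (∀ (X M Y : C) (f : X ⟶ M) (g : M ⟶ Y),
    IsShortExact C f g → X ∈ 𝒞 → Y ∈ 𝒞 → M ∈ A' → M ∈ 𝒞)

section Aux

variable {C}

/-! ### Basic facts about `Prec` -/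

lemma prec_of_mono {X Y : C} (f : X ⟶ Y) [Mono f] : Prec C X Y := by
  refine ⟨1, Nat.one_pos, X, biproduct.lift (fun _ => f), 𝟙 X, ?_, inferInstance⟩
  exact mono_of_mono_fac (biproduct.lift_π (fun _ => f) 0)

lemma prec_of_epi {X Y : C} (f : Y ⟶ X) [Epi f] : Prec C X Y := by
  refine ⟨1, Nat.one_pos, Y, biproduct.lift (fun _ => 𝟙 Y), f, ?_, inferInstance⟩
  exact mono_of_mono_fac (biproduct.lift_π (fun _ => 𝟙 Y) 0)

lemma prec_trans {X Y Z : C} (h₁ : Prec C X Y) (h₂ : Prec C Y Z) : Prec C X Z := by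
  obtain ⟨n, hn, S, ι, π, hι, hπ⟩ := h₁
  obtain ⟨m, hm, T, κ, ρ, hκ, hρ⟩ := h₂
  haveI := hι; haveI := hπ; haveI := hκ; haveI := hρ
  let ρ' : (⨁ fun _ : Fin n => T) ⟶ ⨁ fun _ : Fin n => Y := biproduct.map fun _ => ρ
  let κ' : (⨁ fun _ : Fin n => T) ⟶ ⨁ fun _ : Fin n => ⨁ fun _ : Fin m => Z :=
    biproduct.map fun _ => κ
  haveI : Epi ρ' := biproduct.map_epi _
  haveI : Mono κ' := biproduct.map_mono _
  let e : (⨁ fun _ : Fin n => ⨁ fun _ : Fin m => Z) ≅ ⨁ fun _ : Fin (n * m) => Z :=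
    (biproductBiproductIso (fun _ : Fin n => Fin m) (fun _ _ => Z)).trans
      (biproduct.whiskerEquiv
        ((Equiv.sigmaEquivProd (Fin n) (Fin m)).trans finProdFinEquiv)
        (fun _ => Iso.refl Z))
  refine ⟨n * m, Nat.mul_pos hn hm, pullback ι ρ',
    pullback.snd ι ρ' ≫ κ' ≫ e.hom, pullback.fst ι ρ' ≫ π, ?_, ?_⟩
  · haveI : Mono (pullback.snd ι ρ') := inferInstance
    exact mono_comp _ _
  · haveI : Epi (pullback.fst ι ρ') := inferInstance
    exact epi_comp _ _

lemma supp_subset {X Y : C} (h : Prec C X Y) : supp C X ⊆ supp C Y := by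
  rintro x ⟨P, hpt, hprec⟩
  exact ⟨P, hpt, prec_trans hprec h⟩

/-! ### Noetherian objects are closed under subobjects and quotients -/

lemma isNoetherianObject_of_mono {X Y : C} (f : X ⟶ Y) [Mono f] [IsNoetherianObject Y] :
    IsNoetherianObject X := by
  dsimp only [IsNoetherianObject]
  rw [ObjectProperty.is_iff, isNoetherianObject]
  constructor
  have key : ∀ {s t : Subobject X}, s < t →
      (Subobject.mk (s.arrow ≫ f) : Subobject Y) < Subobject.mk (t.arrow ≫ f) := by
    intro s t hst
    rw [lt_iff_le_not_ge] at hst ⊢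
    obtain ⟨hle, hnle⟩ := hst
    constructor
    · exact Subobject.mk_le_mk_of_comm (Subobject.ofLE s t hle)
        (by rw [← Category.assoc, Subobject.ofLE_arrow])
    · intro hc
      apply hnle
      have w := Subobject.ofMkLEMk_comp hc
      rw [← Category.assoc] at w
      exact Subobject.le_of_comm (Subobject.ofMkLEMk _ _ hc) ((cancel_mono f).1 w)
  exact Subrelation.wf
    (r := InvImage ((· > ·) : Subobject Y → Subobject Y → Prop)
      (fun s : Subobject X => Subobject.mk (s.arrow ≫ f)))
    (fun {a b} h => key h)
    (InvImage.wf (fun s : Subobject X => Subobject.mk (s.arrow ≫ f))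
      (wellFounded_gt (α := Subobject Y)))

lemma isNoetherianObject_of_epi {M N : C} (p : M ⟶ N) [Epi p] [IsNoetherianObject M] :
    IsNoetherianObject N := by
  dsimp only [IsNoetherianObject]
  rw [ObjectProperty.is_iff, isNoetherianObject]
  constructor
  have key : ∀ {s t : Subobject N}, s < t →
      (Subobject.mk (pullback.snd s.arrow p) : Subobject M) <
        Subobject.mk (pullback.snd t.arrow p) := by
    intro s t hst
    rw [lt_iff_le_not_ge] at hst ⊢
    obtain ⟨hle, hnle⟩ := hst
    constructor
    · refine Subobject.mk_le_mk_of_comm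
        (pullback.lift (pullback.fst s.arrow p ≫ Subobject.ofLE s t hle)
          (pullback.snd s.arrow p) ?_) (pullback.lift_snd _ _ _)
      rw [Category.assoc, Subobject.ofLE_arrow, pullback.condition]
    · intro hc
      apply hnle
      have w := Subobject.ofMkLEMk_comp hc
      have hcomm : (Subobject.ofMkLEMk _ _ hc ≫ pullback.fst s.arrow p) ≫ s.arrow
          = pullback.fst t.arrow p ≫ t.arrow := by
        rw [Category.assoc, pullback.condition, ← Category.assoc, w, pullback.condition]
      have hker : kernel.ι (pullback.fst t.arrow p) ≫
          (Subobject.ofMkLEMk _ _ hc ≫ pullback.fst s.arrow p) = 0 := by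
        rw [← cancel_mono s.arrow, Category.assoc, hcomm, ← Category.assoc,
          kernel.condition, zero_comp, zero_comp]
      refine Subobject.le_of_comm
        (Abelian.epiDesc (pullback.fst t.arrow p) _ hker) ?_
      rw [← cancel_epi (pullback.fst t.arrow p), ← Category.assoc,
        Abelian.comp_epiDesc, hcomm]
  exact Subrelation.wf
    (r := InvImage ((· > ·) : Subobject M → Subobject M → Prop)
      (fun s : Subobject N => Subobject.mk (pullback.snd s.arrow p)))
    (fun {a b} h => key h)
    (InvImage.wf (fun s : Subobject N => Subobject.mk (pullback.snd s.arrow p))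
      (wellFounded_gt (α := Subobject M)))

/-! ### `Aprime` is closed under subobjects and quotients -/

lemma mem_aprime_of_mono {X Y : C} (f : X ⟶ Y) [Mono f] (h : Y ∈ Aprime C) :
    X ∈ Aprime C := by
  haveI := h.1
  exact ⟨isNoetherianObject_of_mono f, fun x hx => h.2 x (supp_subset (prec_of_mono f) hx)⟩

lemma mem_aprime_of_epi {X Y : C} (f : X ⟶ Y) [Epi f] (h : X ∈ Aprime C) :
    Y ∈ Aprime C := by
  haveI := h.1
  exact ⟨isNoetherianObject_of_epi f, fun x hx => h.2 x (supp_subset (prec_of_epi f) hx)⟩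

/-! ### Miscellaneous abelian category facts -/

lemma mono_of_kernel_comp_zero {A B D : C} (p : A ⟶ B) (v : B ⟶ D) [Epi p]
    (h : kernel.ι (p ≫ v) ≫ p = 0) : Mono v := by
  have w : pullback.fst p (kernel.ι v) ≫ (p ≫ v) = 0 := by
    rw [← Category.assoc, pullback.condition, Category.assoc, kernel.condition, comp_zero]
  have hfac : pullback.fst p (kernel.ι v) = kernel.lift (p ≫ v) _ w ≫ kernel.ι (p ≫ v) :=
    (kernel.lift_ι _ _ w).symm
  have h2 : pullback.snd p (kernel.ι v) ≫ kernel.ι v = 0 := by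
    rw [← pullback.condition, hfac, Category.assoc, h, comp_zero]
  have h3 : kernel.ι v = 0 := zero_of_epi_comp (pullback.snd p (kernel.ι v)) h2
  exact Preadditive.mono_of_kernel_zero h3

/-- For an epimorphism `e`, the cokernel of its kernel is its target. -/
noncomputable def cokernelKernelIso {M N : C} (e : M ⟶ N) [Epi e] :
    cokernel (kernel.ι e) ≅ N :=
  (cokernelIsCokernel (kernel.ι e)).coconePointUniqueUpToIso
    (Abelian.epiIsCokernelOfKernel (KernelFork.ofι (kernel.ι e) (kernel.condition e))
      (kernelIsKernel e))

/-- For an epimorphism `e`, the cokernel of the subobject `mk (kernel.ι e)` is the target. -/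
noncomputable def cokernelMkKernelIso {M N : C} (e : M ⟶ N) [Epi e] :
    cokernel ((Subobject.mk (kernel.ι e)).arrow) ≅ N :=
  cokernelIsoOfEq (Subobject.underlyingIso_hom_comp_eq_mk (kernel.ι e)).symm ≪≫
    cokernelEpiComp _ _ ≪≫ cokernelKernelIso e

noncomputable def cokernelBotIso (M : C) : cokernel ((⊥ : Subobject M).arrow) ≅ M :=
  cokernelIsoOfEq Subobject.bot_arrow ≪≫ cokernelZeroIsoTarget

lemma le_mk_kernel {M Z : C} (h : M ⟶ Z) (t : Subobject M) (w : t.arrow ≫ h = 0) :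
    t ≤ Subobject.mk (kernel.ι h) :=
  Subobject.le_mk_of_comm (kernel.lift h t.arrow w) (kernel.lift_ι _ _ _)

lemma le_of_comp_cokernel_zero {M : C} {s K : Subobject M}
    (w : s.arrow ≫ cokernel.π K.arrow = 0) : s ≤ K :=
  Subobject.le_of_comm (Abelian.monoLift K.arrow s.arrow w) (Abelian.monoLift_comp _ _ _)

lemma mk_kernel_arrow_comp {M Z : C} (h : M ⟶ Z) :
    (Subobject.mk (kernel.ι h)).arrow ≫ h = 0 := by
  rw [← Subobject.underlyingIso_hom_comp_eq_mk (kernel.ι h), Category.assoc,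
    kernel.condition, comp_zero]

lemma isShortExact_of_epi {A B : C} (g : A ⟶ B) [Epi g] :
    IsShortExact C (kernel.ι g) g := by
  refine ⟨kernel.condition g, ?_⟩
  exact ShortComplex.ShortExact.mk'
    (ShortComplex.exact_of_f_is_kernel _ (kernelIsKernel g))
    (inferInstanceAs (Mono (kernel.ι g))) (inferInstanceAs (Epi g))

end Aux

section Main

variable {C}

/-- Key lemma: if `𝒞 ⊆ A'` is replete and closed under cokernels of morphisms between its
objects, then (under the standing hypotheses) `𝒞` is closed under quotients. -/
lemma mem_of_epi_of_cokernel_closed {𝒞 : Set C}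
    (hrep : ∀ X Y : C, X ∈ 𝒞 → Nonempty (X ≅ Y) → Y ∈ 𝒞)
    (h𝒞 : 𝒞 ⊆ Aprime C) (hass : HasAssociatedPoints C)
    (hcok : ∀ (X Y : C) (f : X ⟶ Y), X ∈ 𝒞 → Y ∈ 𝒞 → cokernel f ∈ 𝒞)
    {M N : C} (e : M ⟶ N) [Epi e] (hM : M ∈ 𝒞) : N ∈ 𝒞 := by
  haveI : IsNoetherianObject M := (h𝒞 hM).1
  have main : ∀ t : Subobject M, cokernel t.arrow ∈ 𝒞 →
      ∀ K : Subobject M, t ≤ K → cokernel K.arrow ∈ 𝒞 := by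
    intro t
    refine (wellFounded_gt (α := Subobject M)).induction
      (C := fun t => cokernel t.arrow ∈ 𝒞 →
        ∀ K : Subobject M, t ≤ K → cokernel K.arrow ∈ 𝒞) t ?_
    clear t; intro s IH hs K hK
    have hw : s.arrow ≫ cokernel.π K.arrow = 0 := by
      rw [← Subobject.ofLE_arrow hK, Category.assoc, cokernel.condition, comp_zero]
    let φ : cokernel s.arrow ⟶ cokernel K.arrow := cokernel.desc s.arrow (cokernel.π K.arrow) hw
    have hπφ : cokernel.π s.arrow ≫ φ = cokernel.π K.arrow := cokernel.π_desc _ _ _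
    haveI hφepi : Epi φ := epi_of_epi_fac hπφ
    by_cases hz : IsZero (kernel φ)
    · haveI : Mono φ := Preadditive.mono_of_kernel_zero (hz.eq_of_src (kernel.ι φ) 0)
      haveI : IsIso φ := isIso_of_mono_of_epi φ
      exact hrep _ _ hs ⟨asIso φ⟩
    · have hsA : cokernel s.arrow ∈ Aprime C := h𝒞 hs
      have hKA : kernel φ ∈ Aprime C := mem_aprime_of_mono (kernel.ι φ) hsA
      obtain ⟨x, P0, hpt, q, hq⟩ := hass (kernel φ) hz
      haveI := hq
      have hsupp : x ∈ supp C (cokernel s.arrow) :=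
        ⟨P0, hpt, prec_of_mono (q ≫ kernel.ι φ)⟩
      obtain ⟨g, hg⟩ := hsA.2 x hsupp P0 hpt (cokernel s.arrow) hsA.1 hsupp
      have hu : g ≫ (q ≫ kernel.ι φ) ≠ 0 := fun h0 =>
        hg (zero_of_comp_mono (q ≫ kernel.ι φ) h0)
    -- the cokernel of the endomorphism `u = g ≫ q ≫ kernel.ι φ` of `cokernel s.arrow`
      have hcu : cokernel (g ≫ (q ≫ kernel.ι φ)) ∈ 𝒞 := hcok _ _ _ hs hs
      have hw0 : s.arrow ≫ cokernel.π s.arrow ≫ cokernel.π (g ≫ (q ≫ kernel.ι φ)) = 0 := by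
        rw [← Category.assoc s.arrow (cokernel.π s.arrow), cokernel.condition, zero_comp]
      have hst' : s ≤ Subobject.mk
          (kernel.ι (cokernel.π s.arrow ≫ cokernel.π (g ≫ (q ≫ kernel.ι φ)))) :=
        le_mk_kernel _ s hw0
      have hnle : ¬ Subobject.mk
          (kernel.ι (cokernel.π s.arrow ≫ cokernel.π (g ≫ (q ≫ kernel.ι φ)))) ≤ s := by
        intro hle
        have h0 : kernel.ι (cokernel.π s.arrow ≫ cokernel.π (g ≫ (q ≫ kernel.ι φ))) ≫
            cokernel.π s.arrow = 0 := by
          rw [← Subobject.ofMkLE_arrow hle, Category.assoc, cokernel.condition, comp_zero]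
        haveI : Mono (cokernel.π (g ≫ (q ≫ kernel.ι φ))) := mono_of_kernel_comp_zero _ _ h0
        exact hu (zero_of_comp_mono (cokernel.π (g ≫ (q ≫ kernel.ι φ)))
          (cokernel.condition _))
      have hlt : s < Subobject.mk
          (kernel.ι (cokernel.π s.arrow ≫ cokernel.π (g ≫ (q ≫ kernel.ι φ)))) :=
        lt_of_le_of_ne hst' (fun he => hnle (le_of_eq he.symm))
      have hψ : (g ≫ (q ≫ kernel.ι φ)) ≫ φ = 0 := by
        rw [Category.assoc, Category.assoc, kernel.condition, comp_zero, comp_zero]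
      have hfac : cokernel.π K.arrow =
          (cokernel.π s.arrow ≫ cokernel.π (g ≫ (q ≫ kernel.ι φ))) ≫
            cokernel.desc (g ≫ (q ≫ kernel.ι φ)) φ hψ := by
        rw [Category.assoc, cokernel.π_desc (g ≫ (q ≫ kernel.ι φ)) φ hψ, hπφ]
      have ht'K : Subobject.mk
          (kernel.ι (cokernel.π s.arrow ≫ cokernel.π (g ≫ (q ≫ kernel.ι φ)))) ≤ K := by
        apply le_of_comp_cokernel_zero
        have h5 := reassoc_of% (mk_kernel_arrow_comp
          (cokernel.π s.arrow ≫ cokernel.π (g ≫ (q ≫ kernel.ι φ))))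
        rw [hfac]
        simp only [Category.assoc]
        rw [h5, zero_comp]
      haveI : Epi (cokernel.π s.arrow ≫ cokernel.π (g ≫ (q ≫ kernel.ι φ))) := epi_comp _ _
      have ht'𝒞 : cokernel (Subobject.mk
          (kernel.ι (cokernel.π s.arrow ≫ cokernel.π (g ≫ (q ≫ kernel.ι φ))))).arrow ∈ 𝒞 :=
        hrep _ _ hcu ⟨(cokernelMkKernelIso
          (cokernel.π s.arrow ≫ cokernel.π (g ≫ (q ≫ kernel.ι φ)))).symm⟩
      exact IH _ hlt ht'𝒞 K ht'K
  have h1 : cokernel ((⊥ : Subobject M).arrow) ∈ 𝒞 := hrep _ _ hM ⟨(cokernelBotIso M).symm⟩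
  have h2 := main ⊥ h1 (Subobject.mk (kernel.ι e)) bot_le
  exact hrep _ _ h2 ⟨cokernelMkKernelIso e⟩

/-- Key lemma: a torsion class in `A'` is closed under subobjects. -/
lemma mem_of_mono_of_torsion {𝒞 : Set C}
    (hrep : ∀ X Y : C, X ∈ 𝒞 → Nonempty (X ≅ Y) → Y ∈ 𝒞)
    (h𝒞 : 𝒞 ⊆ Aprime C) (hass : HasAssociatedPoints C)
    (hzero : ∀ Z : C, IsZero Z → Z ∈ 𝒞)
    (hquot : ∀ (X Y : C) (f : X ⟶ Y), Epi f → X ∈ 𝒞 → Y ∈ Aprime C → Y ∈ 𝒞)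
    (hext : ∀ (X M Y : C) (f : X ⟶ M) (g : M ⟶ Y),
      IsShortExact C f g → X ∈ 𝒞 → Y ∈ 𝒞 → M ∈ Aprime C → M ∈ 𝒞)
    {N M : C} (m : N ⟶ M) [Mono m] (hM : M ∈ 𝒞) (hN : N ∈ Aprime C) : N ∈ 𝒞 := by
  haveI : IsNoetherianObject N := hN.1
  have main : ∀ I : Subobject N, cokernel I.arrow ∈ 𝒞 := by
    intro I
    refine (wellFounded_gt (α := Subobject N)).induction
      (C := fun I => cokernel I.arrow ∈ 𝒞) I ?_
    clear I; intro I IH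
    have hNIA : cokernel I.arrow ∈ Aprime C := mem_aprime_of_epi (cokernel.π I.arrow) hN
    by_cases hz : IsZero (cokernel I.arrow)
    · exact hzero _ hz
    obtain ⟨x, P0, hpt, q, hq⟩ := hass _ hz
    haveI := hq
    have hxM : x ∈ supp C M := ⟨P0, hpt, prec_trans (prec_of_mono q)
      (prec_trans (prec_of_epi (cokernel.π I.arrow)) (prec_of_mono m))⟩
    obtain ⟨f, hf⟩ := (h𝒞 hM).2 x hxM P0 hpt M (h𝒞 hM).1 hxM
    have hhne : f ≫ q ≠ 0 := fun h0 => hf (zero_of_comp_mono q h0)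
    have hXA : kernel (cokernel.π (f ≫ q)) ∈ Aprime C :=
      mem_aprime_of_mono (kernel.ι (cokernel.π (f ≫ q))) hNIA
    have hX : kernel (cokernel.π (f ≫ q)) ∈ 𝒞 := by
      refine hquot M (kernel (cokernel.π (f ≫ q)))
        (kernel.lift (cokernel.π (f ≫ q)) (f ≫ q) (cokernel.condition _)) ?_ hM hXA
      exact inferInstanceAs (Epi (Abelian.factorThruImage (f ≫ q)))
    have hw0 : I.arrow ≫ cokernel.π I.arrow ≫ cokernel.π (f ≫ q) = 0 := by
      rw [← Category.assoc I.arrow (cokernel.π I.arrow), cokernel.condition, zero_comp]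
    have hst' : I ≤ Subobject.mk (kernel.ι (cokernel.π I.arrow ≫ cokernel.π (f ≫ q))) :=
      le_mk_kernel _ I hw0
    have hnle : ¬ Subobject.mk (kernel.ι (cokernel.π I.arrow ≫ cokernel.π (f ≫ q))) ≤ I := by
      intro hle
      have h0 : kernel.ι (cokernel.π I.arrow ≫ cokernel.π (f ≫ q)) ≫
          cokernel.π I.arrow = 0 := by
        rw [← Subobject.ofMkLE_arrow hle, Category.assoc, cokernel.condition, comp_zero]
      haveI : Mono (cokernel.π (f ≫ q)) := mono_of_kernel_comp_zero _ _ h0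
      exact hhne (zero_of_comp_mono (cokernel.π (f ≫ q)) (cokernel.condition _))
    have hlt : I < Subobject.mk (kernel.ι (cokernel.π I.arrow ≫ cokernel.π (f ≫ q))) :=
      lt_of_le_of_ne hst' (fun he => hnle (le_of_eq he.symm))
    haveI : Epi (cokernel.π I.arrow ≫ cokernel.π (f ≫ q)) := epi_comp _ _
    have hY : cokernel (f ≫ q) ∈ 𝒞 := hrep _ _ (IH _ hlt)
      ⟨cokernelMkKernelIso (cokernel.π I.arrow ≫ cokernel.π (f ≫ q))⟩
    exact hext _ _ _ (kernel.ι (cokernel.π (f ≫ q))) (cokernel.π (f ≫ q))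
      (isShortExact_of_epi _) hX hY hNIA
  exact hrep _ _ (main ⊥) ⟨cokernelBotIso N⟩

end Main

/-- Let `A` be a locally noetherian Grothendieck category in which every
nonzero object has an associated point, and let `A'` be the full subcategory of `A_fg` of
objects all of whose support points satisfy condition `(*)`.  For a full replete
subcategory `𝒞 ⊆ A'` the following are equivalent: `𝒞` is a Serre subcategory of `A'`;
`𝒞` is a torsion class in `A'`; `𝒞` is a thick subcategory of `A'`; `𝒞` is a narrow
subcategory of `A'`. -/
theorem serre_tfae_torsion_thick_narrow
    [HasColimits C] [AB5 C]
    (hln : LocallyNoetherian C) (hass : HasAssociatedPoints C)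
    (𝒞 : Set C) (h𝒞 : 𝒞 ⊆ Aprime C)
    (hrep : ∀ X Y : C, X ∈ 𝒞 → Nonempty (X ≅ Y) → Y ∈ 𝒞) :
    List.TFAE [IsSerreIn C (Aprime C) 𝒞, IsTorsionClassIn C (Aprime C) 𝒞,
      IsThickIn C (Aprime C) 𝒞, IsNarrowIn C (Aprime C) 𝒞] := by
  tfae_have 1 → 2 := by
    rintro ⟨hz, hsub, hq, he⟩
    exact ⟨hz, hq, he⟩
  tfae_have 2 → 3 := by
    rintro ⟨hz, hq, he⟩
    refine ⟨hz, ?_, ?_, he⟩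
    · intro X Y f hX hY
      exact mem_of_mono_of_torsion hrep h𝒞 hass hz hq he (kernel.ι f) hX
        (mem_aprime_of_mono (kernel.ι f) (h𝒞 hX))
    · intro X Y f hX hY
      exact hq Y (cokernel f) (cokernel.π f) inferInstance hY
        (mem_aprime_of_epi (cokernel.π f) (h𝒞 hY))
  tfae_have 3 → 4 := by
    rintro ⟨hz, hk, hc, he⟩
    exact ⟨hz, hc, he⟩
  tfae_have 4 → 1 := by
    rintro ⟨hz, hc, he⟩
    have hq : ∀ (X Y : C) (f : X ⟶ Y), Epi f → X ∈ 𝒞 → Y ∈ Aprime C → Y ∈ 𝒞 := by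
      intro X Y f hf hX _
      haveI := hf
      exact mem_of_epi_of_cokernel_closed hrep h𝒞 hass hc f hX
    refine ⟨hz, ?_, hq, he⟩
    intro X Y f hf hY hXA
    haveI := hf
    exact mem_of_mono_of_torsion hrep h𝒞 hass hz hq he f hY hXA
  tfae_finish


end RosenbergSpec
end

section
/- Let A be a locally noetherian Grothendieck category in which every nonzero object has an associated point. If M and N are objects of A with Hom_A(M,N) ≠ 0, then Supp(M) ∩ Ass(N) ≠ ∅. -/
/-!
Common set-up: Rosenberg's spectrum of an abelian category.

For objects `X Y` of an abelian category `C`, `X ≺ Y` means that `X` is a subquotient of a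
finite direct sum of copies of `Y`; `X ≈ Y` means `X ≺ Y ≺ X`.  A nonzero object `P` is
*spectral* if it is `≈`-equivalent to each of its nonzero subobjects, and the spectrum
`𝔖pec(C)` is the collection of `≈`-equivalence classes `⟨P⟩` of spectral objects.
`Supp(M) = {⟨P⟩ : P ≺ M}` and `Ass(M) = {⟨P⟩ : some spectral object of class ⟨P⟩ embeds in M}`.
-/

open CategoryTheory CategoryTheory.Limits

attribute [local instance] CategoryTheory.Abelian.hasFiniteBiproducts
attribute [local instance] CategoryTheory.Limits.hasBinaryBiproducts_of_finite_biproducts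

universe v u

namespace RosenbergSpec

/-- Let `A` be a locally noetherian Grothendieck category in which every
nonzero object has an associated point.  If `Hom(M, N) ≠ 0` then
`Supp(M) ∩ Ass(N) ≠ ∅`. -/
theorem supp_inter_ass_nonempty_of_hom_ne_zero
    (A : Type u) [Category.{v} A] [Abelian A] [HasColimits A] [AB5 A]
    (hln : LocallyNoetherian A) (hass : HasAssociatedPoints A)
    (M N : A) (h : ∃ f : M ⟶ N, f ≠ 0) :
    (supp A M ∩ ass A N).Nonempty := by
  obtain ⟨f, hf⟩ := h
  -- the image of f
  have hI : ¬ IsZero (Limits.image f) := by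
    intro hz
    apply hf
    have : f = factorThruImage f ≫ Limits.image.ι f := (Limits.image.fac f).symm
    rw [this, hz.eq_zero_of_src (Limits.image.ι f), Limits.comp_zero]
  obtain ⟨x, P, hxP, g, hg⟩ := hass (Limits.image f) hI
  refine ⟨x, ⟨P, hxP, ?_⟩, ⟨P, hxP, g ≫ Limits.image.ι f, ?_⟩⟩
  · -- P ≺ M : pull back the epi M ⟶ image f along g
    refine ⟨1, one_pos, pullback (factorThruImage f) g,
      pullback.fst _ _ ≫ biproduct.ι (fun _ : Fin 1 => M) 0, pullback.snd _ _, ?_, ?_⟩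
    · have : Mono (pullback.fst (factorThruImage f) g) := pullback.fst_of_mono
      exact mono_comp _ _
    · infer_instance
  · exact mono_comp _ _

end RosenbergSpec
end
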